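/- Let n ≥ 3, and let S be the real vector space of families c = (c_{ij}^{lm})_{i,j,l,m ∈ {1,…,n}} with c_{ij}^{lm} = c_{ji}^{lm}, equipped with its natural (Euclidean/product) topology. Then the set of c ∈ S for which the only matrix b = (b^k_s) satisfying the first-order compatibility system associated to c is b = 0, is open and dense in S. -/

import Mathlib

open Finset

/-- The space of families `c i j l m` of real coefficients symmetric in the lower
indices `i, j`. -/
def SymCoeffs (n : ℕ) : Type :=
  {c : Fin n → Fin n → Fin n → Fin n → ℝ // ∀ i j l m, c i j l m = c j i l m}

instance (n : ℕ) : TopologicalSpace (SymCoeffs n) :=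
  instTopologicalSpaceSubtype

/-- The set of coefficient families `c` for which the only matrix `b` satisfying the
first-order compatibility system associated to `c` is `b = 0`. -/
def NondegenerateSet (n : ℕ) : Set (SymCoeffs n) :=
  {c | ∀ b : Fin n → Fin n → ℝ,
    (∀ i p : Fin n, i < p → ∀ j l : Fin n,
      ∑ k : Fin n,
        ((c.1 i j l k - c.1 k j l i) * b k p + (c.1 k j l p - c.1 p j l k) * b k i +
         (c.1 p j k i - c.1 i j k p) * b l k + (c.1 i k l p - c.1 p k l i) * b k j) = 0) →
    b = 0}


open Matrix

lemma gram_det_ne_zero_iff {ι κ : Type*} [Fintype ι] [Fintype κ] [DecidableEq κ]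
    (B : Matrix ι κ ℝ) :
    (Bᵀ * B).det ≠ 0 ↔ ∀ v : κ → ℝ, B.mulVec v = 0 → v = 0 := by
  rw [← isUnit_iff_ne_zero, ← Matrix.isUnit_iff_isUnit_det,
    ← Matrix.mulVec_injective_iff_isUnit]
  constructor
  · intro h v hv
    apply h
    rw [← Matrix.mulVec_mulVec, hv, Matrix.mulVec_zero, Matrix.mulVec_zero]
  · intro h
    rw [← Matrix.coe_mulVecLin, injective_iff_map_eq_zero]
    intro v hv
    apply h
    rw [← dotProduct_self_eq_zero (v := B.mulVec v)]
    calc B.mulVec v ⬝ᵥ B.mulVec v = (B.mulVec v ᵥ* B) ⬝ᵥ v := by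
          rw [Matrix.dotProduct_mulVec]
      _ = (Bᵀ *ᵥ (B *ᵥ v)) ⬝ᵥ v := by rw [Matrix.mulVec_transpose]
      _ = 0 := by
          rw [Matrix.mulVec_mulVec]
          simp only [Matrix.mulVecLin_apply] at hv
          rw [hv]; simp


/-- Kronecker delta. -/
def D {n : ℕ} (a b : Fin n) : ℝ := if a = b then 1 else 0

def u {n : ℕ} (a : Fin n) : ℝ := (a : ℕ) + 1

/-- The explicit nondegenerate coefficient family. -/
def cstar {n : ℕ} (i j l m : Fin n) : ℝ := u i * D i l * D j m + u j * D j l * D i m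

lemma Dsymm {n : ℕ} (a b : Fin n) : D a b = D b a := by
  simp [D, eq_comm]

lemma D_eq_zero {n : ℕ} {a b : Fin n} (h : a ≠ b) : D a b = 0 := by simp [D, h]

lemma sumA {n : ℕ} (a b c : Fin n) (v : Fin n → ℝ) :
    ∑ k, cstar a b c k * v k = u a * D a c * v b + u b * D b c * v a := by
  simp [cstar, D, add_mul, mul_assoc, Finset.sum_add_distrib, mul_ite, ite_mul,
    Finset.sum_ite_eq, Finset.sum_ite_eq']

lemma sumB {n : ℕ} (b c d : Fin n) (v : Fin n → ℝ) :
    ∑ k, cstar k b c d * v k = u c * D b d * v c + u b * D b c * v d := by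
  simp [cstar, D, u, add_mul, mul_assoc, Finset.sum_add_distrib, mul_ite, ite_mul,
    Finset.sum_ite_eq, Finset.sum_ite_eq']


lemma sumC {n : ℕ} (a b d : Fin n) (v : Fin n → ℝ) :
    ∑ k, cstar a b k d * v k = u a * D b d * v a + u b * D a d * v b := by
  simp [cstar, D, add_mul, mul_assoc, Finset.sum_add_distrib, mul_ite, ite_mul,
    Finset.sum_ite_eq, Finset.sum_ite_eq']

lemma sumD {n : ℕ} (a c d : Fin n) (v : Fin n → ℝ) :
    ∑ k, cstar a k c d * v k = u a * D a c * v d + u c * D a d * v c := by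
  simp [cstar, D, u, add_mul, mul_assoc, Finset.sum_add_distrib, mul_ite, ite_mul,
    Finset.sum_ite_eq, Finset.sum_ite_eq']

lemma cstar_eqn {n : ℕ} {i p : Fin n} (hip : i ≠ p) (b : Fin n → Fin n → ℝ) (j l : Fin n) :
    ∑ k : Fin n,
        ((cstar i j l k - cstar k j l i) * b k p + (cstar k j l p - cstar p j l k) * b k i +
         (cstar p j k i - cstar i j k p) * b l k + (cstar i k l p - cstar p k l i) * b k j)
    = u i * D i l * (b j p + b p j) - u p * D p l * (b j i + b i j)
      + (u l - u i) * D j p * b l i + (u p - u l) * D i j * b l p := by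
  have expand : ∀ k : Fin n,
      (cstar i j l k - cstar k j l i) * b k p + (cstar k j l p - cstar p j l k) * b k i +
         (cstar p j k i - cstar i j k p) * b l k + (cstar i k l p - cstar p k l i) * b k j
      = (cstar i j l k * b k p - cstar k j l i * b k p)
        + (cstar k j l p * b k i - cstar p j l k * b k i)
        + (cstar p j k i * b l k - cstar i j k p * b l k)
        + (cstar i k l p * b k j - cstar p k l i * b k j) := by
    intro k; ring
  rw [Finset.sum_congr rfl (fun k _ => expand k)]
  rw [Finset.sum_add_distrib, Finset.sum_add_distrib, Finset.sum_add_distrib,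
    Finset.sum_sub_distrib, Finset.sum_sub_distrib, Finset.sum_sub_distrib,
    Finset.sum_sub_distrib]
  rw [sumA i j l (fun k => b k p), sumB j l i (fun k => b k p),
    sumB j l p (fun k => b k i), sumA p j l (fun k => b k i),
    sumC p j i (fun k => b l k), sumC i j p (fun k => b l k),
    sumD i l p (fun k => b k j), sumD p l i (fun k => b k j)]
  rw [D_eq_zero hip, D_eq_zero (Ne.symm hip), Dsymm j i]
  ring

lemma u_pos {n : ℕ} (a : Fin n) : (0:ℝ) < u a := by
  simp only [u]; positivity

lemma u_ne {n : ℕ} {a c : Fin n} (h : a ≠ c) : u a ≠ u c := by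
  simp only [u]
  intro hc
  exact h (Fin.val_injective (by exact_mod_cast add_right_cancel hc))

lemma D_refl {n : ℕ} (a : Fin n) : D a a = 1 := if_pos rfl

lemma cstar_nondeg {n : ℕ} (hn : 3 ≤ n) (b : Fin n → Fin n → ℝ)
    (H : ∀ i p : Fin n, i < p → ∀ j l : Fin n,
      ∑ k : Fin n,
        ((cstar i j l k - cstar k j l i) * b k p + (cstar k j l p - cstar p j l k) * b k i +
         (cstar p j k i - cstar i j k p) * b l k + (cstar i k l p - cstar p k l i) * b k j) = 0) :
    b = 0 := by
  have HE : ∀ i p : Fin n, i < p → ∀ j l : Fin n,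
      u i * D i l * (b j p + b p j) - u p * D p l * (b j i + b i j)
      + (u l - u i) * D j p * b l i + (u p - u l) * D i j * b l p = 0 := by
    intro i p hip j l
    rw [← cstar_eqn (ne_of_lt hip) b j l]
    exact H i p hip j l
  have hS1 : ∀ i j m : Fin n, i < m → i ≠ j → b j m + b m j = 0 := by
    intro i j m him hij
    have h1 := HE i m him j i
    rw [D_eq_zero (fun h => (ne_of_lt him) h.symm), D_eq_zero hij, D_refl] at h1
    simp only [mul_one, one_mul, sub_self, zero_mul, mul_zero, add_zero, sub_zero,
      zero_add, zero_sub, neg_eq_zero] at h1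
    rcases mul_eq_zero.mp h1 with h | h
    · exact absurd h (ne_of_gt (u_pos i))
    · exact h
  have hS2 : ∀ p j m : Fin n, m < p → p ≠ j → b j m + b m j = 0 := by
    intro p j m hmp hpj
    have h1 := HE m p hmp j p
    rw [D_eq_zero (ne_of_lt hmp), D_eq_zero (Ne.symm hpj), D_refl] at h1
    simp only [mul_one, one_mul, sub_self, zero_mul, mul_zero, add_zero, sub_zero,
      zero_add, zero_sub, neg_eq_zero] at h1
    rcases mul_eq_zero.mp h1 with h | h
    · exact absurd h (ne_of_gt (u_pos p))
    · exact h
  have hS : ∀ j m : Fin n, j ≠ m → b j m + b m j = 0 := by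
    intro j m hjm
    have hx : ∃ x : Fin n, x ≠ j ∧ x ≠ m := by
      by_contra h
      push_neg at h
      have hsub : (Finset.univ : Finset (Fin n)) ⊆ {j, m} := by
        intro x _
        simp only [Finset.mem_insert, Finset.mem_singleton]
        by_cases hxj : x = j
        · exact Or.inl hxj
        · exact Or.inr (h x hxj)
      have hc := Finset.card_le_card hsub
      simp only [Finset.card_univ, Fintype.card_fin] at hc
      have h2 : ({j, m} : Finset (Fin n)).card ≤ 2 :=
        le_trans (Finset.card_insert_le _ _) (by simp)
      omega
    obtain ⟨x, hxj, hxm⟩ := hx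
    rcases lt_trichotomy x m with h | h | h
    · exact hS1 x j m h hxj
    · exact absurd h hxm
    · exact hS2 x j m h hxj
  have hDiag : ∀ a : Fin n, b a a = 0 := by
    intro a
    by_cases ha : (a : ℕ) = 0
    · obtain ⟨z, hz⟩ : ∃ z : Fin n, (z : ℕ) = 1 := ⟨⟨1, by omega⟩, rfl⟩
      have h01 : a < z := by rw [Fin.lt_def]; omega
      have hne : a ≠ z := ne_of_lt h01
      have h1 := HE a z h01 a z
      rw [D_eq_zero hne, D_refl] at h1
      simp only [mul_one, one_mul, sub_self, zero_mul, mul_zero, add_zero, sub_zero,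
        zero_add, zero_sub, neg_eq_zero] at h1
      rcases mul_eq_zero.mp h1 with h | h
      · exact absurd h (ne_of_gt (u_pos _))
      · linarith
    · obtain ⟨z, hz⟩ : ∃ z : Fin n, (z : ℕ) = 0 := ⟨⟨0, by omega⟩, rfl⟩
      have h0a : z < a := by rw [Fin.lt_def]; omega
      have hne : a ≠ z := fun h => (ne_of_lt h0a) h.symm
      have h1 := HE z a h0a a z
      rw [D_refl, D_eq_zero hne, D_eq_zero (Ne.symm hne)] at h1
      simp only [mul_one, one_mul, sub_self, zero_mul, mul_zero, add_zero, sub_zero,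
        zero_add, zero_sub, neg_eq_zero] at h1
      rcases mul_eq_zero.mp h1 with h | h
      · exact absurd h (ne_of_gt (u_pos _))
      · linarith
  have hOff : ∀ i p : Fin n, i < p → b i p = 0 := by
    intro i p hip
    have h1 := HE i p hip i i
    rw [D_eq_zero (ne_of_lt hip), D_eq_zero (fun h => (ne_of_lt hip) h.symm), D_refl] at h1
    simp only [mul_one, one_mul, sub_self, zero_mul, mul_zero, add_zero, sub_zero,
      zero_add, zero_sub, neg_eq_zero] at h1
    have hs := hS i p (ne_of_lt hip)
    rw [hs, mul_zero, zero_add] at h1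
    rcases mul_eq_zero.mp h1 with h | h
    · exact absurd (sub_eq_zero.mp h) (u_ne (fun hh => (ne_of_lt hip) hh.symm))
    · exact h
  funext a c
  rcases lt_trichotomy a c with h | h | h
  · exact hOff a c h
  · rw [h]; exact hDiag c
  · have h1 := hOff c a h
    have h2 := hS c a (ne_of_lt h)
    simp only [Pi.zero_apply]
    linarith


def Amat {n : ℕ} (c : Fin n → Fin n → Fin n → Fin n → ℝ) :
    Matrix (Fin n × Fin n × Fin n × Fin n) (Fin n × Fin n) ℝ :=
  fun r q =>
    if r.1 < r.2.1 then
      (if q.2 = r.2.1 then c r.1 r.2.2.1 r.2.2.2 q.1 - c q.1 r.2.2.1 r.2.2.2 r.1 else 0)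
      + (if q.2 = r.1 then c q.1 r.2.2.1 r.2.2.2 r.2.1 - c r.2.1 r.2.2.1 r.2.2.2 q.1 else 0)
      + (if q.1 = r.2.2.2 then c r.2.1 r.2.2.1 q.2 r.1 - c r.1 r.2.2.1 q.2 r.2.1 else 0)
      + (if q.2 = r.2.2.1 then c r.1 q.1 r.2.2.2 r.2.1 - c r.2.1 q.1 r.2.2.2 r.1 else 0)
    else 0

lemma Amat_mulVec {n : ℕ} (c : Fin n → Fin n → Fin n → Fin n → ℝ) (b : Fin n → Fin n → ℝ)
    (i p j l : Fin n) (hip : i < p) :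
    (Amat c).mulVec (fun q => b q.1 q.2) (i, p, j, l)
    = ∑ k : Fin n,
        ((c i j l k - c k j l i) * b k p + (c k j l p - c p j l k) * b k i +
         (c p j k i - c i j k p) * b l k + (c i k l p - c p k l i) * b k j) := by
  simp only [Matrix.mulVec, dotProduct, Amat, hip, if_true]
  rw [Fintype.sum_prod_type]
  simp only [add_mul, ite_mul, zero_mul, Finset.sum_add_distrib, Finset.sum_ite_eq',
    Finset.mem_univ, if_true, Finset.sum_ite_irrel, Finset.sum_const_zero]

lemma Amat_mulVec_zero_row {n : ℕ} (c : Fin n → Fin n → Fin n → Fin n → ℝ)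
    (v : Fin n × Fin n → ℝ) (i p j l : Fin n) (hip : ¬ i < p) :
    (Amat c).mulVec v (i, p, j, l) = 0 := by
  simp [Matrix.mulVec, dotProduct, Amat, hip]

lemma Amat_line {n : ℕ} (c₀ c₁ : Fin n → Fin n → Fin n → Fin n → ℝ) (t : ℝ)
    (r : Fin n × Fin n × Fin n × Fin n) (q : Fin n × Fin n) :
    Amat (fun i j l m => c₀ i j l m + t * (c₁ i j l m - c₀ i j l m)) r q
      = Amat c₀ r q + t * (Amat c₁ r q - Amat c₀ r q) := by
  simp only [Amat]
  split_ifs <;> ring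


lemma mem_nondeg_iff {n : ℕ} (c : SymCoeffs n) :
    c ∈ NondegenerateSet n ↔ ((Amat c.1)ᵀ * Amat c.1).det ≠ 0 := by
  rw [gram_det_ne_zero_iff]
  constructor
  · intro hc v hv
    have heqs : ∀ i p : Fin n, i < p → ∀ j l : Fin n,
        ∑ k : Fin n,
          ((c.1 i j l k - c.1 k j l i) * v (k, p) + (c.1 k j l p - c.1 p j l k) * v (k, i) +
           (c.1 p j k i - c.1 i j k p) * v (l, k) + (c.1 i k l p - c.1 p k l i) * v (k, j)) = 0 := by
      intro i p hip j l
      have h1 := Amat_mulVec c.1 (fun k s => v (k, s)) i p j l hip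
      have h2 : (Amat c.1).mulVec (fun q => v (q.1, q.2)) (i, p, j, l) = 0 := by
        have h3 : (fun q : Fin n × Fin n => v (q.1, q.2)) = v := by
          funext q; rfl
        rw [h3, hv]; rfl
      rw [h2] at h1
      exact h1.symm
    have hb := hc (fun k s => v (k, s)) heqs
    funext q
    have := congrFun (congrFun hb q.1) q.2
    simpa using this
  · intro hdet b hb
    have hv : (Amat c.1).mulVec (fun q => b q.1 q.2) = 0 := by
      funext r
      obtain ⟨i, p, j, l⟩ := r
      by_cases hip : i < p
      · rw [Amat_mulVec c.1 b i p j l hip]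
        simpa using hb i p hip j l
      · simpa using Amat_mulVec_zero_row c.1 _ i p j l hip
    have h0 := hdet _ hv
    funext k s
    have := congrFun h0 (k, s)
    simpa using this

lemma continuous_entry {n : ℕ} (a b d e : Fin n) :
    Continuous fun c : SymCoeffs n => c.1 a b d e :=
  (continuous_apply e).comp <| (continuous_apply d).comp <|
    (continuous_apply b).comp <| (continuous_apply a).comp continuous_subtype_val

lemma continuous_Amat {n : ℕ} (r : Fin n × Fin n × Fin n × Fin n) (q : Fin n × Fin n) :
    Continuous fun c : SymCoeffs n => Amat c.1 r q := by
  simp only [Amat]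
  refine Continuous.if_const _ ?_ continuous_const
  have h : ∀ a b d e a' b' d' e' : Fin n, Continuous fun c : SymCoeffs n =>
      c.1 a b d e - c.1 a' b' d' e' :=
    fun a b d e a' b' d' e' => (continuous_entry a b d e).sub (continuous_entry a' b' d' e')
  exact (((Continuous.if_const _ (h _ _ _ _ _ _ _ _) continuous_const).add
    (Continuous.if_const _ (h _ _ _ _ _ _ _ _) continuous_const)).add
    (Continuous.if_const _ (h _ _ _ _ _ _ _ _) continuous_const)).add
    (Continuous.if_const _ (h _ _ _ _ _ _ _ _) continuous_const)

lemma continuous_det {n : ℕ} :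
    Continuous fun c : SymCoeffs n => ((Amat c.1)ᵀ * Amat c.1).det := by
  have hA : Continuous fun c : SymCoeffs n => Amat c.1 := by
    apply continuous_matrix
    intro r q
    exact continuous_Amat r q
  exact Continuous.matrix_det ((Continuous.matrix_transpose hA).matrix_mul hA)

lemma cstar_symm {n : ℕ} (i j l m : Fin n) : cstar i j l m = cstar j i l m := by
  simp only [cstar]; ring

lemma nondeg_isOpen {n : ℕ} : IsOpen (NondegenerateSet n) := by
  have : NondegenerateSet n
      = (fun c : SymCoeffs n => ((Amat c.1)ᵀ * Amat c.1).det) ⁻¹' ({0}ᶜ) := by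
    ext c
    simp only [Set.mem_preimage, Set.mem_compl_iff, Set.mem_singleton_iff]
    exact mem_nondeg_iff c
  rw [this]
  exact (isOpen_compl_singleton).preimage continuous_det

lemma nondeg_dense {n : ℕ} (hn : 3 ≤ n) : Dense (NondegenerateSet n) := by
  intro c₀
  set F : ℝ → SymCoeffs n := fun t =>
    ⟨fun i j l m => c₀.1 i j l m + t * (cstar i j l m - c₀.1 i j l m), by
      intro i j l m
      dsimp only
      rw [c₀.2 i j l m, cstar_symm i j l m]⟩ with hF
  have hF0 : F 0 = c₀ := by
    apply Subtype.ext
    funext i j l m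
    simp [hF]
  have hFcont : Continuous F := by
    apply Continuous.subtype_mk
    refine continuous_pi fun i => continuous_pi fun j => continuous_pi fun l =>
      continuous_pi fun m => ?_
    exact continuous_const.add (continuous_id.mul continuous_const)
  -- the polynomial
  set P : Matrix (Fin n × Fin n × Fin n × Fin n) (Fin n × Fin n) (Polynomial ℝ) :=
    fun r q => Polynomial.C (Amat c₀.1 r q)
      + Polynomial.X * Polynomial.C (Amat cstar r q - Amat c₀.1 r q) with hP
  set qp : Polynomial ℝ := (Pᵀ * P).det with hqp
  have heval : ∀ t : ℝ, qp.eval t = ((Amat (F t).1)ᵀ * Amat (F t).1).det := by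
    intro t
    have hmap : P.map (Polynomial.eval t) = Amat (F t).1 := by
      funext r q
      show Polynomial.eval t (P r q) = _
      simp only [Matrix.map_apply, hP, Polynomial.eval_add, Polynomial.eval_C,
        Polynomial.eval_mul, Polynomial.eval_X]
      exact (Amat_line c₀.1 cstar t r q).symm
    have := (Polynomial.evalRingHom t).map_det (Pᵀ * P)
    simp only [Polynomial.coe_evalRingHom] at this
    rw [hqp, this, RingHom.mapMatrix_apply, Matrix.map_mul, Matrix.transpose_map,
      Polynomial.coe_evalRingHom, hmap]
  have hcstar : (⟨cstar, cstar_symm⟩ : SymCoeffs n) ∈ NondegenerateSet n := by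
    intro b hb
    exact cstar_nondeg hn b hb
  have hq1 : qp.eval 1 ≠ 0 := by
    rw [heval 1]
    have hF1 : (F 1).1 = cstar := by
      funext i j l m
      simp [hF]
    rw [show (F 1) = (⟨cstar, cstar_symm⟩ : SymCoeffs n) from Subtype.ext hF1]
    exact (mem_nondeg_iff _).mp hcstar
  have hqne : qp ≠ 0 := by
    intro h
    rw [h] at hq1
    simp at hq1
  have hfin := Polynomial.finite_setOf_isRoot hqne
  have hsel : ∀ k : ℕ, ∃ t : ℝ, 0 < t ∧ t < 1 / (k + 1) ∧ qp.eval t ≠ 0 := by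
    intro k
    have hinf : (Set.Ioo (0:ℝ) (1 / (k + 1))).Infinite :=
      Set.Ioo_infinite (by positivity)
    obtain ⟨t, ht⟩ := (hinf.diff hfin).nonempty
    exact ⟨t, ht.1.1, ht.1.2, ht.2⟩
  choose t ht0 ht1 htne using hsel
  have htt : Filter.Tendsto t Filter.atTop (nhds 0) := by
    apply squeeze_zero (fun k => le_of_lt (ht0 k)) (fun k => le_of_lt (ht1 k))
    exact tendsto_one_div_add_atTop_nhds_zero_nat
  have htF : Filter.Tendsto (fun k => F (t k)) Filter.atTop (nhds c₀) := by
    rw [← hF0]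
    exact (hFcont.tendsto 0).comp htt
  refine mem_closure_of_tendsto htF ?_
  filter_upwards with k
  rw [mem_nondeg_iff, ← heval (t k)]
  exact htne k

theorem nondegenerateSet_isOpen_and_dense (n : ℕ) (hn : 3 ≤ n) :
    IsOpen (NondegenerateSet n) ∧ Dense (NondegenerateSet n) :=
  ⟨nondeg_isOpen, nondeg_dense hn⟩
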